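/- Let γ be real, let L_0 be the ℂ-linear endomorphism of the space of 3×3 complex matrices given by L_0(ρ) := γ·(E_{02} ρ E_{20} − (1/2)(E_{22} ρ + ρ E_{22})), and let P be the ℂ-linear endomorphism given by P(ρ) := (ρ_{00}+ρ_{22}) E_{00} + ρ_{01} E_{01} + ρ_{10} E_{10} + ρ_{11} E_{11}. Then for every t ∈ ℝ one has P∘exp(−t L_0) = P and exp(t L_0)∘P = P. -/

import Mathlib

set_option maxHeartbeats 1000000
set_option synthInstance.maxHeartbeats 400000


attribute [local instance] Matrix.linftyOpNormedAddCommGroup Matrix.linftyOpNormedSpace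

/-- The standard matrix unit `E_{ij}` (a `1` in row `i`, column `j`). -/
noncomputable def matUnit (i j : Fin 3) : Matrix (Fin 3) (Fin 3) ℂ :=
  Matrix.single i j 1

/-- Port helper: the ring of continuous ℂ-linear endomorphisms of the matrices is a topological
ring (the instance is no longer found automatically through the local norm instances). -/
instance matCLM_isTopologicalRing :
    IsTopologicalRing (Matrix (Fin 3) (Fin 3) ℂ →L[ℂ] Matrix (Fin 3) (Fin 3) ℂ) :=
  @NonUnitalSeminormedRing.toIsTopologicalRing _
    (ContinuousLinearMap.toSeminormedRing (𝕜 := ℂ)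
      (E := Matrix (Fin 3) (Fin 3) ℂ)).toNonUnitalSeminormedRing

lemma aux_mul_exp {A : Type*} [NormedRing A] [NormedAlgebra ℂ A] [CompleteSpace A]
    (p x : A) (h : p * x = 0) : p * NormedSpace.exp x = p := by
  have hsum : Summable fun n : ℕ => ((Nat.factorial n : ℂ))⁻¹ • x ^ n :=
    NormedSpace.expSeries_summable' (𝕂 := ℂ) x
  rw [NormedSpace.exp_eq_tsum (𝕂 := ℂ)]
  have h1 : p * (∑' n : ℕ, ((Nat.factorial n : ℂ))⁻¹ • x ^ n)
      = ∑' n : ℕ, p * (((Nat.factorial n : ℂ))⁻¹ • x ^ n) := by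
    simpa using ContinuousLinearMap.map_tsum (ContinuousLinearMap.mul ℂ A p) hsum
  rw [h1, tsum_eq_single 0]
  · simp
  · intro n hn
    obtain ⟨m, rfl⟩ := Nat.exists_eq_succ_of_ne_zero hn
    rw [pow_succ', mul_smul_comm, ← mul_assoc, h, zero_mul, smul_zero]

lemma aux_exp_mul {A : Type*} [NormedRing A] [NormedAlgebra ℂ A] [CompleteSpace A]
    (p x : A) (h : x * p = 0) : NormedSpace.exp x * p = p := by
  have hsum : Summable fun n : ℕ => ((Nat.factorial n : ℂ))⁻¹ • x ^ n :=
    NormedSpace.expSeries_summable' (𝕂 := ℂ) x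
  rw [NormedSpace.exp_eq_tsum (𝕂 := ℂ)]
  have h1 : (∑' n : ℕ, ((Nat.factorial n : ℂ))⁻¹ • x ^ n) * p
      = ∑' n : ℕ, (((Nat.factorial n : ℂ))⁻¹ • x ^ n) * p := by
    simpa using ContinuousLinearMap.map_tsum ((ContinuousLinearMap.mul ℂ A).flip p) hsum
  rw [h1, tsum_eq_single 0]
  · simp
  · intro n hn
    obtain ⟨m, rfl⟩ := Nat.exists_eq_succ_of_ne_zero hn
    rw [pow_succ, smul_mul_assoc, mul_assoc, h, mul_zero, smul_zero]

/-- for the three-level model generator `L_0` and the projector `P` one has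
`P ∘ exp(-t L_0) = P` and `exp(t L_0) ∘ P = P` for every `t`. -/
theorem stmt15 (γ : ℝ)
    (L₀ P : Matrix (Fin 3) (Fin 3) ℂ →L[ℂ] Matrix (Fin 3) (Fin 3) ℂ)
    (hL₀ : ∀ ρ, L₀ ρ = (γ : ℂ) •
      (matUnit 0 2 * ρ * matUnit 2 0 -
        (1 / 2 : ℂ) • (matUnit 2 2 * ρ + ρ * matUnit 2 2)))
    (hP : ∀ ρ, P ρ = (ρ 0 0 + ρ 2 2) • matUnit 0 0 + ρ 0 1 • matUnit 0 1 +
      ρ 1 0 • matUnit 1 0 + ρ 1 1 • matUnit 1 1) :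
    ∀ t : ℝ, P * NormedSpace.exp ((-t) • L₀) = P ∧
      NormedSpace.exp (t • L₀) * P = P := by
  have hPL : P * L₀ = 0 := by
    ext ρ i j
    rw [ContinuousLinearMap.mul_apply, hP, hL₀]
    fin_cases i <;> fin_cases j <;>
      simp [matUnit, Matrix.single, Matrix.mul_apply, Fin.sum_univ_three,
        Matrix.smul_apply, Matrix.add_apply, Matrix.sub_apply] <;> ring
  have hLP : L₀ * P = 0 := by
    ext ρ i j
    rw [ContinuousLinearMap.mul_apply, hL₀, hP]
    fin_cases i <;> fin_cases j <;>
      simp [matUnit, Matrix.single, Matrix.mul_apply, Fin.sum_univ_three,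
        Matrix.smul_apply, Matrix.add_apply, Matrix.sub_apply] <;> ring
  have hPL' : ∀ ρ, P (L₀ ρ) = 0 := fun ρ => by
    simpa using ContinuousLinearMap.ext_iff.mp hPL ρ
  have hLP' : ∀ ρ, L₀ (P ρ) = 0 := fun ρ => by
    simpa using ContinuousLinearMap.ext_iff.mp hLP ρ
  have hsmulM : ∀ (s : ℝ) (m : Matrix (Fin 3) (Fin 3) ℂ), s • m = (s : ℂ) • m := by
    intro s m
    ext i j
    simp [Complex.real_smul]
  have k1 : ∀ s : ℝ, P * (s • L₀) = 0 := by
    intro s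
    ext ρ
    rw [ContinuousLinearMap.mul_apply, ContinuousLinearMap.smul_apply, hsmulM,
      map_smul, hPL' ρ, smul_zero]
    simp
  have k2 : ∀ s : ℝ, (s • L₀) * P = 0 := by
    intro s
    ext ρ
    rw [ContinuousLinearMap.mul_apply, ContinuousLinearMap.smul_apply, hLP' ρ, smul_zero]
    simp
  intro t
  have hc : CompleteSpace (Matrix (Fin 3) (Fin 3) ℂ →L[ℂ] Matrix (Fin 3) (Fin 3) ℂ) :=
    FiniteDimensional.complete ℂ _
  letI : NormedRing (Matrix (Fin 3) (Fin 3) ℂ →L[ℂ] Matrix (Fin 3) (Fin 3) ℂ) :=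
    ContinuousLinearMap.toNormedRing (𝕜 := ℂ)
  letI : NormedAlgebra ℂ (Matrix (Fin 3) (Fin 3) ℂ →L[ℂ] Matrix (Fin 3) (Fin 3) ℂ) :=
    ContinuousLinearMap.toNormedAlgebra (𝕜 := ℂ)
  haveI : @CompleteSpace (Matrix (Fin 3) (Fin 3) ℂ →L[ℂ] Matrix (Fin 3) (Fin 3) ℂ)
      (PseudoMetricSpace.toUniformSpace) := hc
  exact ⟨aux_mul_exp P ((-t) • L₀) (k1 (-t)), aux_exp_mul P (t • L₀) (k2 t)⟩
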